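/- Let A, B be Young functions such that A dominates B near zero (B(t) ≤ A(ct) for 0 ≤ t ≤ t₀). Then there is a constant C such that for every non-increasing f : (0,∞) → [0,∞), ‖f‖_{L^B(1,∞)} ≤ C ‖f‖_{L^A(0,∞)}. -/

import Mathlib

open MeasureTheory Set
open scoped ENNReal NNReal

noncomputable section

/-- The non-increasing rearrangement of `f` with respect to the measure `μ`:
`f*(s) = inf { t : μ {x | f x > t} ≤ s }`. -/
def rearr {α : Type*} [MeasurableSpace α] (μ : Measure α) (f : α → ℝ≥0∞) (s : ℝ) : ℝ≥0∞ :=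
  sInf {t : ℝ≥0∞ | μ {x | t < f x} ≤ ENNReal.ofReal s}
/-- A Young function: convex, non-decreasing, left-continuous, vanishing at `0`,
not identically `0` nor identically `∞` on `(0,∞)`. -/
structure YoungFunction where
  toFun : ℝ≥0∞ → ℝ≥0∞
  zero' : toFun 0 = 0
  mono' : Monotone toFun
  convex' : ∀ (a b : ℝ≥0∞) (θ : ℝ), 0 ≤ θ → θ ≤ 1 →
    toFun (ENNReal.ofReal θ * a + ENNReal.ofReal (1 - θ) * b) ≤
      ENNReal.ofReal θ * toFun a + ENNReal.ofReal (1 - θ) * toFun b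
  leftCont' : ∀ t : ℝ≥0∞, t ≠ 0 → toFun t = ⨆ s : {s : ℝ≥0∞ // s < t}, toFun s.1
  nontrivial_ne_zero' : ∃ t : ℝ≥0∞, 0 < t ∧ t ≠ ⊤ ∧ toFun t ≠ 0
  nontrivial_ne_top' : ∃ t : ℝ≥0∞, 0 < t ∧ toFun t ≠ ⊤

/-- The Luxemburg norm of `h : ℝ → ℝ≥0∞` over the set `I ⊆ ℝ` associated with
the Young function `A`. -/
def luxNorm (A : YoungFunction) (I : Set ℝ) (h : ℝ → ℝ≥0∞) : ℝ≥0∞ :=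
  sInf {l : ℝ≥0∞ | 0 < l ∧ ∫⁻ s in I, A.toFun (h s / l) ≤ 1}

lemma young_bound (A : YoungFunction) :
    ∃ M : ℝ≥0∞, M ≠ ⊤ ∧ ∀ x : ℝ≥0∞, x ≠ ⊤ → A.toFun x ≤ 1 → x ≤ M := by
  obtain ⟨t₁, ht₁0, ht₁top, hA⟩ := A.nontrivial_ne_zero'
  refine ⟨t₁ + t₁ / A.toFun t₁, ?_, ?_⟩
  · simp [ENNReal.add_ne_top, ht₁top, ENNReal.div_eq_top, hA]
  · intro x hxtop hx1
    rcases le_or_gt x t₁ with hle | hlt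
    · exact le_add_of_le_of_nonneg hle zero_le
    · refine le_add_of_nonneg_of_le zero_le ?_
      rw [ENNReal.le_div_iff_mul_le (Or.inl hA) (Or.inr ht₁top)]
      set θ : ℝ := t₁.toReal / x.toReal with hθ
      have hx0 : x ≠ 0 := (ht₁0.trans hlt).ne'
      have hxR : 0 < x.toReal := ENNReal.toReal_pos hx0 hxtop
      have ht₁R : 0 < t₁.toReal := ENNReal.toReal_pos ht₁0.ne' ht₁top
      have hθ0 : 0 ≤ θ := by positivity
      have hθ1 : θ ≤ 1 := by
        rw [div_le_one hxR]
        exact (ENNReal.toReal_le_toReal ht₁top hxtop).2 hlt.le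
      have hmul : ENNReal.ofReal θ * x = t₁ := by
        rw [← ENNReal.ofReal_toReal hxtop, ← ENNReal.ofReal_mul hθ0,
          div_mul_cancel₀ _ hxR.ne']
        exact ENNReal.ofReal_toReal ht₁top
      have := A.convex' x 0 θ hθ0 hθ1
      rw [mul_zero, add_zero, hmul, A.zero', mul_zero, add_zero] at this
      calc x * A.toFun t₁ ≤ x * (ENNReal.ofReal θ * A.toFun x) :=
            mul_le_mul_right this x
        _ ≤ x * (ENNReal.ofReal θ * 1) :=
            mul_le_mul_right (mul_le_mul_right hx1 _) x
        _ = ENNReal.ofReal θ * x := by ring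
        _ = t₁ := hmul

/-- If `A` dominates `B` near zero (`B(t) ≤ A(ct)` for `0 ≤ t ≤ t₀`),
then there is a constant `C` such that `‖f‖_{L^B(1,∞)} ≤ C ‖f‖_{L^A(0,∞)}` for every
non-increasing `f : (0,∞) → [0,∞)`. -/
theorem tail_inequality_of_domination_near_zero (A B : YoungFunction) (c t₀ : ℝ)
    (hc : 0 < c) (ht₀ : 0 < t₀)
    (hdom : ∀ t : ℝ, 0 ≤ t → t ≤ t₀ →
      B.toFun (ENNReal.ofReal t) ≤ A.toFun (ENNReal.ofReal (c * t))) :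
    ∃ C : ℝ≥0, ∀ f : ℝ → ℝ, (∀ s ∈ Set.Ioi (0:ℝ), 0 ≤ f s) → AntitoneOn f (Set.Ioi 0) →
      luxNorm B (Set.Ioi 1) (fun s => ENNReal.ofReal (f s)) ≤
        (C : ℝ≥0∞) * luxNorm A (Set.Ioi 0) (fun s => ENNReal.ofReal (f s)) := by
  obtain ⟨M, hMtop, hM⟩ := young_bound A
  set C : ℝ≥0 := 1 + c.toNNReal + (M / ENNReal.ofReal t₀).toNNReal with hCdef
  have hC0 : (C : ℝ≥0∞) ≠ 0 := by
    simp only [hCdef]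
    positivity
  have hCtop : (C : ℝ≥0∞) ≠ ⊤ := ENNReal.coe_ne_top
  have ht₀0 : ENNReal.ofReal t₀ ≠ 0 := by simp [ht₀, ht₀.le, ENNReal.ofReal_pos.2 ht₀]
  have hdivtop : M / ENNReal.ofReal t₀ ≠ ⊤ := by
    simp [ENNReal.div_eq_top, hMtop, ht₀0]
  have hcC : ENNReal.ofReal c ≤ (C : ℝ≥0∞) := by
    have h1 : c.toNNReal ≤ C := by
      rw [hCdef]
      exact le_add_of_le_of_nonneg (le_add_of_nonneg_of_le zero_le le_rfl)
        zero_le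
    calc ENNReal.ofReal c = (c.toNNReal : ℝ≥0∞) := rfl
      _ ≤ (C : ℝ≥0∞) := ENNReal.coe_le_coe.2 h1
  have hMC : M ≤ (C : ℝ≥0∞) * ENNReal.ofReal t₀ := by
    rw [← ENNReal.div_le_iff_le_mul (Or.inl ht₀0) (Or.inl ENNReal.ofReal_ne_top)]
    have h1 : (M / ENNReal.ofReal t₀).toNNReal ≤ C := by
      rw [hCdef]
      exact le_add_of_nonneg_of_le zero_le le_rfl
    calc M / ENNReal.ofReal t₀ = ((M / ENNReal.ofReal t₀).toNNReal : ℝ≥0∞) :=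
          (ENNReal.coe_toNNReal hdivtop).symm
      _ ≤ (C : ℝ≥0∞) := ENNReal.coe_le_coe.2 h1
  refine ⟨C, ?_⟩
  intro f hf hanti
  set h : ℝ → ℝ≥0∞ := fun s => ENNReal.ofReal (f s) with hh
  -- key step
  have key : ∀ l : ℝ≥0∞, 0 < l → (∫⁻ s in Ioi (0:ℝ), A.toFun (h s / l)) ≤ 1 →
      luxNorm B (Set.Ioi 1) h ≤ (C : ℝ≥0∞) * l := by
    intro l hl hint
    -- step 1 : for every s > 1, A (h s / l) ≤ 1
    have step1 : ∀ s : ℝ, 1 < s → A.toFun (h s / l) ≤ 1 := by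
      intro s hs
      have hs0 : (0:ℝ) < s := lt_trans one_pos hs
      have hpt : ∀ u : ℝ, u ∈ Ioo (0:ℝ) 1 →
          A.toFun (h s / l) ≤ A.toFun (h u / l) := by
        intro u hu
        refine A.mono' (ENNReal.div_le_div_right ?_ l)
        exact ENNReal.ofReal_le_ofReal (hanti hu.1 hs0 (le_of_lt (hu.2.trans hs)))
      calc A.toFun (h s / l)
          = A.toFun (h s / l) * volume (Ioo (0:ℝ) 1) := by
            simp [Real.volume_Ioo]
        _ = ∫⁻ u in Ioo (0:ℝ) 1, A.toFun (h s / l) := by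
            rw [setLIntegral_const, mul_comm]
        _ = ∫⁻ u, (Ioo (0:ℝ) 1).indicator (fun _ => A.toFun (h s / l)) u := by
            rw [lintegral_indicator measurableSet_Ioo _]
        _ ≤ ∫⁻ u, (Ioi (0:ℝ)).indicator (fun u => A.toFun (h u / l)) u := by
            refine lintegral_mono fun u => ?_
            by_cases hu : u ∈ Ioo (0:ℝ) 1
            · rw [indicator_of_mem hu, indicator_of_mem (mem_Ioi.2 hu.1)]
              exact hpt u hu
            · rw [indicator_of_notMem hu]; exact zero_le
        _ = ∫⁻ u in Ioi (0:ℝ), A.toFun (h u / l) := by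
            rw [lintegral_indicator measurableSet_Ioi _]
        _ ≤ 1 := hint
    -- pointwise comparison on (1,∞)
    have step2 : ∀ s : ℝ, 1 < s →
        B.toFun (h s / ((C : ℝ≥0∞) * l)) ≤ A.toFun (h s / l) := by
      intro s hs
      have hytop : h s / l ≠ ⊤ := by
        simp [ENNReal.div_eq_top, hl.ne', hh]
      have hyM : h s / l ≤ M := hM _ hytop (step1 s hs)
      have hxy : h s / ((C : ℝ≥0∞) * l) = (h s / l) / (C : ℝ≥0∞) := by
        rw [div_eq_mul_inv, div_eq_mul_inv, div_eq_mul_inv,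
          ENNReal.mul_inv (Or.inl hC0) (Or.inl hCtop)]
        ring
      have hxt₀ : h s / ((C : ℝ≥0∞) * l) ≤ ENNReal.ofReal t₀ := by
        rw [hxy, ENNReal.div_le_iff_le_mul (Or.inl hC0) (Or.inl hCtop)]
        calc h s / l ≤ M := hyM
          _ ≤ (C : ℝ≥0∞) * ENNReal.ofReal t₀ := hMC
          _ = ENNReal.ofReal t₀ * (C : ℝ≥0∞) := mul_comm _ _
      have hxtop : h s / ((C : ℝ≥0∞) * l) ≠ ⊤ :=
        (lt_of_le_of_lt hxt₀ ENNReal.ofReal_lt_top).ne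
      have hxR0 : 0 ≤ (h s / ((C : ℝ≥0∞) * l)).toReal := ENNReal.toReal_nonneg
      have hxRt₀ : (h s / ((C : ℝ≥0∞) * l)).toReal ≤ t₀ :=
        ENNReal.toReal_le_of_le_ofReal ht₀.le hxt₀
      have hcx : ENNReal.ofReal c * (h s / ((C : ℝ≥0∞) * l)) ≤ h s / l := by
        rw [hxy, div_eq_mul_inv]
        calc ENNReal.ofReal c * (h s / l * (C : ℝ≥0∞)⁻¹)
            ≤ (C : ℝ≥0∞) * (h s / l * (C : ℝ≥0∞)⁻¹) := mul_le_mul_left hcC _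
          _ = (h s / l) * ((C : ℝ≥0∞) * (C : ℝ≥0∞)⁻¹) := by ring
          _ = h s / l := by rw [ENNReal.mul_inv_cancel hC0 hCtop, mul_one]
      calc B.toFun (h s / ((C : ℝ≥0∞) * l))
          = B.toFun (ENNReal.ofReal (h s / ((C : ℝ≥0∞) * l)).toReal) := by
            rw [ENNReal.ofReal_toReal hxtop]
        _ ≤ A.toFun (ENNReal.ofReal (c * (h s / ((C : ℝ≥0∞) * l)).toReal)) :=
            hdom _ hxR0 hxRt₀
        _ = A.toFun (ENNReal.ofReal c * (h s / ((C : ℝ≥0∞) * l))) := by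
            rw [ENNReal.ofReal_mul hc.le, ENNReal.ofReal_toReal hxtop]
        _ ≤ A.toFun (h s / l) := A.mono' hcx
    -- integral comparison
    have hintB : (∫⁻ s in Ioi (1:ℝ), B.toFun (h s / ((C : ℝ≥0∞) * l))) ≤ 1 := by
      calc (∫⁻ s in Ioi (1:ℝ), B.toFun (h s / ((C : ℝ≥0∞) * l)))
          = ∫⁻ s, (Ioi (1:ℝ)).indicator
              (fun s => B.toFun (h s / ((C : ℝ≥0∞) * l))) s := by
            rw [lintegral_indicator measurableSet_Ioi _]
        _ ≤ ∫⁻ s, (Ioi (0:ℝ)).indicator (fun s => A.toFun (h s / l)) s := by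
            refine lintegral_mono fun s => ?_
            by_cases hs : s ∈ Ioi (1:ℝ)
            · rw [indicator_of_mem hs,
                indicator_of_mem (mem_Ioi.2 (lt_trans one_pos (mem_Ioi.1 hs)))]
              exact step2 s (mem_Ioi.1 hs)
            · rw [indicator_of_notMem hs]; exact zero_le
        _ = ∫⁻ s in Ioi (0:ℝ), A.toFun (h s / l) := by
            rw [lintegral_indicator measurableSet_Ioi _]
        _ ≤ 1 := hint
    exact sInf_le ⟨ENNReal.mul_pos hC0 hl.ne', hintB⟩
  -- conclude
  have hdiv : luxNorm B (Set.Ioi 1) h / (C : ℝ≥0∞) ≤ luxNorm A (Set.Ioi 0) h := by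
    refine le_sInf fun l hl => ?_
    rw [ENNReal.div_le_iff_le_mul (Or.inl hC0) (Or.inl hCtop), mul_comm]
    exact key l hl.1 hl.2
  calc luxNorm B (Set.Ioi 1) h
      ≤ luxNorm A (Set.Ioi 0) h * (C : ℝ≥0∞) := by
        rw [← ENNReal.div_le_iff_le_mul (Or.inl hC0) (Or.inl hCtop)]
        exact hdiv
    _ = (C : ℝ≥0∞) * luxNorm A (Set.Ioi 0) h := mul_comm _ _
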